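/- Let A be a positive bounded linear operator on a complex Hilbert space H, x a unit vector, and r ≥ 1 a real number. Then ⟨A x, x⟩^r ≤ ⟨A^r x, x⟩, where A^r is defined by the continuous functional calculus. -/

import Mathlib

open ContinuousLinearMap

theorem mccarthy_inequality {H : Type*} [NormedAddCommGroup H] [InnerProductSpace ℂ H] [CompleteSpace H]
    (A : H →L[ℂ] H) (hA : A.IsPositive) (x : H) (hx : ‖x‖ = 1) (r : ℝ) (hr : 1 ≤ r) :
    ((inner ℂ (A x) x : ℂ)).re ^ r ≤ ((inner ℂ ((cfc (fun t : ℝ => t ^ r) A) x) x : ℂ)).re := by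
  set s : ℝ := ((inner ℂ (A x) x : ℂ)).re with hs_def
  have hs : 0 ≤ s := hA.re_inner_nonneg_left x
  have hsa : IsSelfAdjoint A := hA.isSelfAdjoint
  have hAnn : (0 : H →L[ℂ] H) ≤ A := (ContinuousLinearMap.nonneg_iff_isPositive A).mpr hA
  have hAspec : ∀ t ∈ spectrum ℝ A, 0 ≤ t := fun t ht => spectrum_nonneg_of_nonneg hAnn ht
  have hcont : ContinuousOn (fun t : ℝ => t ^ r) (spectrum ℝ A) := fun t _ =>
    (Real.continuousAt_rpow_const t r (Or.inr (by linarith))).continuousWithinAt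
  have key : ∀ t ∈ spectrum ℝ A,
      (s ^ r - r * s ^ (r - 1) * s) + (r * s ^ (r - 1)) * t ≤ t ^ r := by
    intro t ht
    have ht0 : 0 ≤ t := hAspec t ht
    rcases eq_or_lt_of_le hs with hs0 | hs0
    · rcases eq_or_lt_of_le hr with hr1 | hr1
      · simp [← hs0, ← hr1, Real.rpow_one]
      · have h1 : (0:ℝ) ^ r = 0 := Real.zero_rpow (by linarith)
        have h2 : (0:ℝ) ^ (r-1) = 0 := Real.zero_rpow (by linarith)
        simp only [← hs0, h1, h2]
        simpa using Real.rpow_nonneg ht0 r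
    · have hu : -1 ≤ t / s - 1 := by
        have : 0 ≤ t / s := div_nonneg ht0 hs
        linarith
      have hb := one_add_mul_self_le_rpow_one_add hu hr
      have h1 : 1 + (t / s - 1) = t / s := by ring
      rw [h1, Real.div_rpow ht0 hs] at hb
      have hsr : s ^ (r - 1) * s = s ^ r := by
        rw [← Real.rpow_add_one hs0.ne' (r - 1), sub_add_cancel]
      have hsrpos : 0 < s ^ r := Real.rpow_pos_of_pos hs0 r
      have hmul := mul_le_mul_of_nonneg_left hb hsrpos.le
      have hcancel : s ^ r * (t ^ r / s ^ r) = t ^ r := by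
        field_simp
      rw [hcancel] at hmul
      have h2 : s ^ r * (t / s) = s ^ (r - 1) * t := by
        rw [← hsr]; field_simp
      have hexp : s ^ r * (1 + r * (t / s - 1))
          = (s ^ r - r * s ^ (r - 1) * s) + (r * s ^ (r - 1)) * t := by
        have : s ^ r * (1 + r * (t / s - 1)) = s ^ r + r * (s ^ r * (t / s)) - r * s ^ r := by
          ring
        rw [this, h2, ← hsr]; ring
      linarith [hexp ▸ hmul]
  have haff : cfc (fun t : ℝ => (s ^ r - r * s ^ (r - 1) * s) + (r * s ^ (r - 1)) * t) A
      ≤ cfc (fun t : ℝ => t ^ r) A := cfc_mono key (by fun_prop) hcont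
  have haff2 : cfc (fun t : ℝ => (s ^ r - r * s ^ (r - 1) * s) + (r * s ^ (r - 1)) * t) A
      = algebraMap ℝ (H →L[ℂ] H) (s ^ r - r * s ^ (r - 1) * s) + (r * s ^ (r - 1)) • A := by
    rw [cfc_const_add (s ^ r - r * s ^ (r - 1) * s) (fun t => (r * s ^ (r - 1)) * t) A
      (by fun_prop) hsa, cfc_const_mul_id (r * s ^ (r - 1)) A hsa]
  rw [haff2] at haff
  have hpos := ((ContinuousLinearMap.le_def _ _).mp haff).re_inner_nonneg_left x
  simp only [RCLike.re_to_complex] at hpos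
  have hself : (inner ℂ x x : ℂ) = 1 := by
    rw [inner_self_eq_norm_sq_to_K, hx]; norm_num
  have hcalc : ∀ (a b : ℝ), ((inner ℂ ((algebraMap ℝ (H →L[ℂ] H) a + b • A) x) x : ℂ)).re
      = a + b * s := by
    intro a b
    rw [ContinuousLinearMap.add_apply, inner_add_left, Complex.add_re]
    have h1 : ((inner ℂ ((algebraMap ℝ (H →L[ℂ] H) a) x) x : ℂ)).re = a := by
      rw [Algebra.algebraMap_eq_smul_one, ContinuousLinearMap.smul_apply,
        ContinuousLinearMap.one_apply, RCLike.real_smul_eq_coe_smul (K := ℂ), inner_smul_left]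
      simp [hself, hx]
    have h2 : ((inner ℂ ((b • A) x) x : ℂ)).re = b * s := by
      rw [ContinuousLinearMap.smul_apply, RCLike.real_smul_eq_coe_smul (K := ℂ), inner_smul_left]
      simp [hs_def]
    rw [h1, h2]
  rw [ContinuousLinearMap.sub_apply, inner_sub_left, Complex.sub_re, hcalc] at hpos
  have hfin : s ^ r - r * s ^ (r - 1) * s + r * s ^ (r - 1) * s = s ^ r := by ring
  rw [hfin] at hpos
  linarith
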